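/- Under the same orthonormalization, the transfer function admits the representation bᵀ(S+λM)^{-1}b = (bᵀM^{-1}b) · e₁ᵀ(T+λI)^{-1}e₁. -/

import Mathlib

open scoped Matrix

/-- After the `M`-orthonormal change of basis `Q` with first column
`q₁ = M⁻¹b/√(bᵀM⁻¹b)`, the transfer function admits the representation
`bᵀ(S+λM)⁻¹b = (bᵀM⁻¹b) · e₁ᵀ(T+λI)⁻¹e₁`, where `T = QᵀSQ`. -/
theorem lanczos_transfer_representation
    (n : ℕ) (S M Q T : Matrix (Fin (n+1)) (Fin (n+1)) ℝ)
    (b : Fin (n+1) → ℝ) (hb : b ≠ 0)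
    (lam : ℝ)
    (hS : S.IsSymm) (hM : M.PosDef)
    (hinv : IsUnit (S + lam • M).det)
    (hQ : Qᵀ * M * Q = 1)
    (hq1 : ∀ i, Q i 0 = (M⁻¹ *ᵥ b) i / Real.sqrt (b ⬝ᵥ (M⁻¹ *ᵥ b)))
    (hT : T = Qᵀ * S * Q) :
    b ⬝ᵥ ((S + lam • M)⁻¹ *ᵥ b) =
      (b ⬝ᵥ (M⁻¹ *ᵥ b)) *
        (Pi.single (0 : Fin (n+1)) (1:ℝ) ⬝ᵥ
          ((T + lam • (1 : Matrix (Fin (n+1)) (Fin (n+1)) ℝ))⁻¹ *ᵥ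
            Pi.single 0 1)) := by
  set A := S + lam • M with hA
  set β := b ⬝ᵥ (M⁻¹ *ᵥ b) with hβdef
  -- β > 0
  have hβpos : 0 < β := by
    have := (hM.inv).dotProduct_mulVec_pos hb
    simpa [hβdef] using this
  have hβne : β ≠ 0 := ne_of_gt hβpos
  set c : ℝ := (Real.sqrt β)⁻¹ with hc
  have hcc : c * c = β⁻¹ := by
    rw [hc, ← mul_inv, Real.mul_self_sqrt hβpos.le]
  -- M invertible
  have hMdet : IsUnit M.det := isUnit_iff_ne_zero.mpr (ne_of_gt hM.det_pos)
  -- congruence : Qᵀ * A * Q = T + lam • 1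
  have hcong : Qᵀ * A * Q = T + lam • (1 : Matrix (Fin (n+1)) (Fin (n+1)) ℝ) := by
    rw [hT, hA]
    rw [← hQ]
    noncomm_ring
  -- (Qᵀ)⁻¹ = M * Q
  have hQTinv : (Qᵀ)⁻¹ = M * Q := by
    apply Matrix.inv_eq_right_inv
    rw [← Matrix.mul_assoc]; exact hQ
  -- Q invertible
  have hQdet : IsUnit Q.det := by
    have h1 : (Qᵀ * M * Q).det = 1 := by rw [hQ, Matrix.det_one]
    rw [Matrix.det_mul, Matrix.det_mul] at h1
    exact IsUnit.of_mul_eq_one (a := Q.det) (Qᵀ.det * M.det) (by linear_combination h1)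
  have hQTdet : IsUnit (Qᵀ).det := by rwa [Matrix.det_transpose]
  -- inverse of congruence
  have hinvcong : (T + lam • (1 : Matrix (Fin (n+1)) (Fin (n+1)) ℝ))⁻¹
      = Q⁻¹ * A⁻¹ * (Qᵀ)⁻¹ := by
    rw [← hcong, Matrix.mul_inv_rev, Matrix.mul_inv_rev, Matrix.mul_assoc]
  -- u := (Qᵀ)⁻¹ *ᵥ e₁ = c • b
  have hQe : Q *ᵥ Pi.single (0 : Fin (n+1)) (1:ℝ) = c • (M⁻¹ *ᵥ b) := by
    funext i
    simp [Matrix.mulVec_single, hq1 i, div_eq_mul_inv, hc, mul_comm]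
  have hu : (Qᵀ)⁻¹ *ᵥ Pi.single (0 : Fin (n+1)) (1:ℝ) = c • b := by
    rw [hQTinv, ← Matrix.mulVec_mulVec, hQe, Matrix.mulVec_smul,
      Matrix.mulVec_mulVec, Matrix.mul_nonsing_inv _ hMdet, Matrix.one_mulVec]
  -- e₁ ᵥ* Q⁻¹ = c • b
  have hv : Pi.single (0 : Fin (n+1)) (1:ℝ) ᵥ* Q⁻¹ = c • b := by
    rw [← Matrix.mulVec_transpose, Matrix.transpose_nonsing_inv, hu]
  have hdot : (c • b) ⬝ᵥ (A⁻¹ *ᵥ (c • b)) = β⁻¹ * (b ⬝ᵥ (A⁻¹ *ᵥ b)) := by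
    rw [smul_dotProduct, Matrix.mulVec_smul, dotProduct_smul,
      smul_eq_mul, smul_eq_mul, ← mul_assoc, hcc]
  calc b ⬝ᵥ (A⁻¹ *ᵥ b)
      = β * (β⁻¹ * (b ⬝ᵥ (A⁻¹ *ᵥ b))) := by
        rw [← mul_assoc, mul_inv_cancel₀ hβne, one_mul]
    _ = β * ((c • b) ⬝ᵥ (A⁻¹ *ᵥ (c • b))) := by rw [hdot]
    _ = β * (Pi.single (0 : Fin (n+1)) (1:ℝ) ⬝ᵥ
          ((T + lam • (1 : Matrix (Fin (n+1)) (Fin (n+1)) ℝ))⁻¹ *ᵥ Pi.single 0 1)) := by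
        conv_rhs => rw [hinvcong, Matrix.mul_assoc, ← Matrix.mulVec_mulVec,
          Matrix.dotProduct_mulVec, hv, ← Matrix.mulVec_mulVec, hu]
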